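/- Let ω be a symmetric (p,p)-double form satisfying the first Bianchi identity on an n-dimensional real inner product space (V,g). Then for all integers k > i ≥ 0 and every r with n−pk+pi+1 ≤ r ≤ pk−pi, the cofactor transformation vanishes: h_{(r,p(k−i))}(ω) = 0. In particular, if n = pk then h_{(r,n−pi)}(ω) = 0 for pi+1 ≤ r ≤ n−pi, and if n = pk+1 then h_{(r,n−pi−1)}(ω) = 0 for pi+2 ≤ r ≤ n−pi−1. -/

import Mathlib

noncomputable section

open Finset

/-- Double forms over an `n`-dimensional real inner product space, described by their
coefficients in a fixed orthonormal basis: a `(p,q)`-double form corresponds to a function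
supported on pairs of subsets of cardinalities `p` and `q`. -/
abbrev DForm (n : ℕ) := Finset (Fin n) → Finset (Fin n) → ℝ

namespace DForm

variable {n : ℕ}

/-- Sign of the shuffle placing the elements of `A` (in increasing order) before
those of `B` (in increasing order). -/
def shuffleSign (A B : Finset (Fin n)) : ℝ :=
  (-1 : ℝ) ^ (∑ x ∈ B, (A.filter fun a => x < a).card)

/-- The exterior product of double forms. -/
def wedge (ω₁ ω₂ : DForm n) : DForm n := fun I J =>
  ∑ A ∈ I.powerset, ∑ B ∈ J.powerset,
    shuffleSign A (I \ A) * shuffleSign B (J \ B) * ω₁ A B * ω₂ (I \ A) (J \ B)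

/-- Exterior powers `ω^k` of a double form. -/
def dpow (ω : DForm n) : ℕ → DForm n
  | 0 => fun I J => if I = ∅ ∧ J = ∅ then 1 else 0
  | k + 1 => wedge ω (dpow ω k)

/-- The double Hodge star operator. -/
def hstar (ω : DForm n) : DForm n := fun I J =>
  shuffleSign Iᶜ I * shuffleSign Jᶜ J * ω Iᶜ Jᶜ

/-- The contraction `c` of double forms. -/
def contr (ω : DForm n) : DForm n := fun I J =>
  ∑ j : Fin n,
    if j ∈ I ∨ j ∈ J then 0
    else shuffleSign {j} I * shuffleSign {j} J * ω (insert j I) (insert j J)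

/-- Iterated contraction `c^k`. -/
def citer (ω : DForm n) : ℕ → DForm n
  | 0 => ω
  | k + 1 => contr (citer ω k)

/-- The inner product of double forms. -/
def dinner (ω₁ ω₂ : DForm n) : ℝ :=
  ∑ I : Finset (Fin n), ∑ J : Finset (Fin n), ω₁ I J * ω₂ I J

/-- The transpose `ω^t` of a double form. -/
def transp (ω : DForm n) : DForm n := fun I J => ω J I

/-- The composition (Greub) product `ω₁ ∘ ω₂` of double forms. -/
def comp (ω₁ ω₂ : DForm n) : DForm n := fun I J =>
  ∑ K : Finset (Fin n), ω₂ I K * ω₁ K J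

/-- The scalar value of a `(0,0)`-double form. -/
def toScalar (ω : DForm n) : ℝ := ω ∅ ∅

/-- The metric, as a `(1,1)`-double form. -/
def gMetric (n : ℕ) : DForm n := fun I J => if I = J ∧ I.card = 1 then 1 else 0

/-- Iterated composition power `ω^{∘r}` of a `(1,1)`-double form, with `ω^{∘0} = g`. -/
def cpow (ω : DForm n) : ℕ → DForm n
  | 0 => gMetric n
  | r + 1 => comp ω (cpow ω r)

/-- The `(1,1)`-double form associated to a bilinear form, given by its matrix in the
orthonormal basis. -/
def ofMatrix (h : Matrix (Fin n) (Fin n) ℝ) : DForm n := fun I J =>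
  ∑ i : Fin n, ∑ j : Fin n, if I = {i} ∧ J = {j} then h i j else 0

/-- `ω` is a `(p,q)`-double form. -/
def IsOfDeg (ω : DForm n) (p q : ℕ) : Prop :=
  ∀ I J : Finset (Fin n), ω I J ≠ 0 → I.card = p ∧ J.card = q

/-- `ω` is a symmetric double form. -/
def IsSym (ω : DForm n) : Prop := ∀ I J, ω I J = ω J I

/-- The sign relating `e_{v 0} ∧ ⋯ ∧ e_{v (p-1)}` to the corresponding increasing
basis `p`-vector (and `0` if the indices are not pairwise distinct). -/
def tupleSign {p : ℕ} (v : Fin p → Fin n) : ℝ :=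
  if Function.Injective v then (((Equiv.Perm.sign (Tuple.sort v)) : ℤ) : ℝ) else 0

/-- Evaluation of a double form on wedges of basis vectors indexed by arbitrary tuples. -/
def evalT (ω : DForm n) {p q : ℕ} (v : Fin p → Fin n) (w : Fin q → Fin n) : ℝ :=
  tupleSign v * tupleSign w * ω (Finset.image v Finset.univ) (Finset.image w Finset.univ)

/-- The first Bianchi identity for a `(2,2)`-double form:
`R(x∧y,z∧t) + R(y∧z,x∧t) + R(z∧x,y∧t) = 0`. -/
def Bianchi2 (R : DForm n) : Prop :=
  ∀ x y z t : Fin n,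
    evalT R ![x, y] ![z, t] + evalT R ![y, z] ![x, t] + evalT R ![z, x] ![y, t] = 0

/-- The first Bianchi identity for a `(p,p)`-double form. -/
def FirstBianchi (ω : DForm n) (p : ℕ) : Prop :=
  ∀ (x : Fin (p + 1) → Fin n) (y : Fin (p - 1) → Fin n),
    ∑ j : Fin (p + 1),
      (-1 : ℝ) ^ (j : ℕ) * evalT ω (x ∘ Fin.succAbove j) (Fin.cons (x j) y) = 0

/-- The characteristic coefficient `s_k(h)` of a bilinear form `h`, defined through the
characteristic polynomial: `det(h - λ g) = ∑ (-1)^(n-i) s_i(h) λ^(n-i)`. -/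
def sInv (h : Matrix (Fin n) (Fin n) ℝ) (k : ℕ) : ℝ :=
  (-1 : ℝ) ^ k * (Matrix.charpoly h).coeff (n - k)

/-- The `k`-th cofactor (Newton) transformation `t_k(h) = (1/(k!(n-1-k)!)) *(g^{n-1-k} h^k)`. -/
def tInv (h : Matrix (Fin n) (Fin n) ℝ) (k : ℕ) : DForm n :=
  ((k.factorial * (n - 1 - k).factorial : ℕ) : ℝ)⁻¹ •
    hstar (wedge (dpow (gMetric n) (n - 1 - k)) (dpow (ofMatrix h) k))

/-- The `(r,q)`-cofactor `s_{(r,q)}(h) = (1/(q!(n-q-r)!)) *(g^{n-q-r} h^q)`. -/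
def sCof (h : Matrix (Fin n) (Fin n) ℝ) (r q : ℕ) : DForm n :=
  ((q.factorial * (n - q - r).factorial : ℕ) : ℝ)⁻¹ •
    hstar (wedge (dpow (gMetric n) (n - q - r)) (dpow (ofMatrix h) q))

end DForm
namespace DForm
/-- The `(r,pq)`-cofactor transformation of a `(p,p)`-double form, defined by the expansion
`h_{(r,pq)}(ω) = ∑_{i=max(0,pq-r)}^{pq} ((-1)^{i+pq}/(i! (r-pq+i)!)) g^{r-pq+i} c^i(ω^q)`. -/
noncomputable def hCof {n : ℕ} (ω : DForm n) (p q r : ℕ) : DForm n :=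
  ∑ i ∈ Finset.Icc (p * q - r) (p * q),
    ((-1 : ℝ) ^ (i + p * q) /
        ((i.factorial : ℝ) * ((r + i - p * q).factorial : ℝ))) •
      wedge (dpow (gMetric n) (r + i - p * q)) (citer (dpow ω q) i)
end DForm
namespace DForm

variable {n : ℕ}

lemma shuffleSign_sq (A B : Finset (Fin n)) : shuffleSign A B * shuffleSign A B = 1 := by
  rw [shuffleSign, ← mul_pow]; norm_num

lemma shuffleSign_empty_left (B : Finset (Fin n)) :
    shuffleSign (∅ : Finset (Fin n)) B = 1 := by
  simp [shuffleSign]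

lemma shuffleSign_insert_left {A : Finset (Fin n)} {j : Fin n} (h : j ∉ A)
    (B : Finset (Fin n)) :
    shuffleSign (insert j A) B = shuffleSign {j} B * shuffleSign A B := by
  rw [shuffleSign, shuffleSign, shuffleSign, ← pow_add, ← Finset.sum_add_distrib]
  congr 1
  refine Finset.sum_congr rfl fun x _ => ?_
  rw [Finset.filter_insert, Finset.filter_singleton]
  by_cases hx : x < j
  · rw [if_pos hx, if_pos hx,
      Finset.card_insert_of_notMem (fun hj => h (Finset.mem_of_mem_filter j hj)),
      Finset.card_singleton]
    omega
  · rw [if_neg hx, if_neg hx, Finset.card_empty]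
    omega

lemma shuffleSign_insert_right (A : Finset (Fin n)) {B : Finset (Fin n)} {x : Fin n}
    (h : x ∉ B) :
    shuffleSign A (insert x B) = shuffleSign A {x} * shuffleSign A B := by
  rw [shuffleSign, shuffleSign, shuffleSign, ← pow_add, Finset.sum_insert h,
    Finset.sum_singleton]

lemma IsOfDeg.wedge_deg {ω₁ ω₂ : DForm n} {p q u v : ℕ} (h₁ : IsOfDeg ω₁ p q)
    (h₂ : IsOfDeg ω₂ u v) : IsOfDeg (wedge ω₁ ω₂) (p + u) (q + v) := by
  intro I J h
  rw [wedge] at h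
  obtain ⟨A, hA, h⟩ := Finset.exists_ne_zero_of_sum_ne_zero h
  obtain ⟨B, hB, h⟩ := Finset.exists_ne_zero_of_sum_ne_zero h
  have h1 : ω₁ A B ≠ 0 := fun hz => h (by rw [hz]; ring)
  have h2 : ω₂ (I \ A) (J \ B) ≠ 0 := fun hz => h (by rw [hz]; ring)
  obtain ⟨hA1, hB1⟩ := h₁ _ _ h1
  obtain ⟨hA2, hB2⟩ := h₂ _ _ h2
  rw [Finset.mem_powerset] at hA hB
  have cA := Finset.card_sdiff_add_card_eq_card hA
  have cB := Finset.card_sdiff_add_card_eq_card hB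
  omega

lemma isOfDeg_dpow {ω : DForm n} {p : ℕ} (h : IsOfDeg ω p p) :
    ∀ q, IsOfDeg (dpow ω q) (p * q) (p * q)
  | 0 => by
    intro I J hIJ
    rw [dpow] at hIJ
    dsimp only at hIJ
    by_cases hc : I = ∅ ∧ J = ∅
    · simp [hc.1, hc.2]
    · rw [if_neg hc] at hIJ; exact absurd rfl hIJ
  | q + 1 => by
    have h2 := IsOfDeg.wedge_deg h (isOfDeg_dpow h q)
    have e : p * (q + 1) = p + p * q := by ring
    rw [dpow, e]
    exact h2

lemma wedge_diag (ψ φ : DForm n) (m : ℕ) (c : ℝ)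
    (hψ : ∀ A B, ψ A B = if A = B ∧ A.card = m then c else 0) (I J : Finset (Fin n)) :
    wedge ψ φ I J = c * ∑ A ∈ (I ∩ J).powersetCard m,
      shuffleSign A (I \ A) * shuffleSign A (J \ A) * φ (I \ A) (J \ A) := by
  rw [wedge]
  have step1 : ∀ A ∈ I.powerset,
      (∑ B ∈ J.powerset,
        shuffleSign A (I \ A) * shuffleSign B (J \ B) * ψ A B * φ (I \ A) (J \ B))
      = if A ⊆ J ∧ A.card = m then
          c * (shuffleSign A (I \ A) * shuffleSign A (J \ A) * φ (I \ A) (J \ A)) else 0 := by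
    intro A _
    have hf : ∀ B ∈ J.powerset,
        shuffleSign A (I \ A) * shuffleSign B (J \ B) * ψ A B * φ (I \ A) (J \ B)
        = if B = A then (if A.card = m then
            c * (shuffleSign A (I \ A) * shuffleSign A (J \ A) * φ (I \ A) (J \ A)) else 0)
          else 0 := by
      intro B _
      by_cases hBA : B = A
      · subst hBA
        by_cases hm : B.card = m
        · rw [if_pos rfl, if_pos hm, hψ, if_pos ⟨rfl, hm⟩]; ring
        · rw [if_pos rfl, if_neg hm, hψ, if_neg (fun hh => hm hh.2), mul_zero, zero_mul]
      · rw [if_neg hBA, hψ, if_neg (fun hh => hBA hh.1.symm), mul_zero, zero_mul]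
    rw [Finset.sum_congr rfl hf, Finset.sum_ite_eq' J.powerset A
      (fun _ => if A.card = m then
        c * (shuffleSign A (I \ A) * shuffleSign A (J \ A) * φ (I \ A) (J \ A)) else 0)]
    simp only [Finset.mem_powerset]
    by_cases h1 : A ⊆ J
    · by_cases h2 : A.card = m
      · rw [if_pos h1, if_pos h2, if_pos ⟨h1, h2⟩]
      · rw [if_pos h1, if_neg h2, if_neg (fun hh => h2 hh.2)]
    · rw [if_neg h1, if_neg (fun hh => h1 hh.1)]
  rw [Finset.sum_congr rfl step1, Finset.mul_sum]
  rw [← Finset.sum_subset (s₁ := (I ∩ J).powersetCard m) (fun A hA => by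
      rw [Finset.mem_powersetCard] at hA
      exact Finset.mem_powerset.2 (hA.1.trans Finset.inter_subset_left))
    (fun A hA hA2 => by
      rw [Finset.mem_powerset] at hA
      rw [if_neg]
      intro hh
      exact hA2 (Finset.mem_powersetCard.2 ⟨Finset.subset_inter hA hh.1, hh.2⟩))]
  refine Finset.sum_congr rfl fun A hA => ?_
  rw [Finset.mem_powersetCard] at hA
  rw [if_pos ⟨hA.1.trans Finset.inter_subset_right, hA.2⟩]

end DForm
namespace DForm

variable {n : ℕ}

lemma gpow_eq : ∀ (m : ℕ) (I J : Finset (Fin n)),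
    dpow (gMetric n) m I J = if I = J ∧ I.card = m then (m.factorial : ℝ) else 0
  | 0, I, J => by
    rw [dpow]; dsimp only
    by_cases hc : I = ∅ ∧ J = ∅
    · rw [if_pos hc, if_pos (by simp [hc.1, hc.2]), Nat.factorial_zero, Nat.cast_one]
    · rw [if_neg hc, if_neg]
      rintro ⟨he, hcard⟩
      exact hc ⟨Finset.card_eq_zero.1 hcard, Finset.card_eq_zero.1 (he ▸ hcard)⟩
  | m + 1, I, J => by
    rw [dpow]
    rw [wedge_diag (gMetric n) (dpow (gMetric n) m) 1 1 (fun A B => rfl) I J, one_mul]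
    by_cases h : I = J ∧ I.card = m + 1
    · obtain ⟨rfl, hc⟩ := h
      rw [if_pos ⟨rfl, hc⟩, Finset.inter_self]
      have hterm : ∀ A ∈ I.powersetCard 1,
          shuffleSign A (I \ A) * shuffleSign A (I \ A) * dpow (gMetric n) m (I \ A) (I \ A)
            = (m.factorial : ℝ) := by
        intro A hA
        rw [Finset.mem_powersetCard] at hA
        rw [gpow_eq m, if_pos ⟨rfl, by rw [Finset.card_sdiff_of_subset hA.1, hA.2, hc]; omega⟩,
          shuffleSign_sq, one_mul]
      rw [Finset.sum_congr rfl hterm, Finset.sum_const, Finset.card_powersetCard, hc,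
        Nat.choose_one_right, nsmul_eq_mul, Nat.factorial_succ, Nat.cast_mul]
    · rw [if_neg h]
      refine Finset.sum_eq_zero fun A hA => ?_
      rw [Finset.mem_powersetCard] at hA
      have hAI : A ⊆ I := hA.1.trans Finset.inter_subset_left
      have hAJ : A ⊆ J := hA.1.trans Finset.inter_subset_right
      rw [gpow_eq m, if_neg, mul_zero]
      rintro ⟨he, hcard⟩
      refine h ⟨?_, ?_⟩
      · rw [← Finset.sdiff_union_of_subset hAI, ← Finset.sdiff_union_of_subset hAJ, he]
      · rw [← Finset.card_sdiff_add_card_eq_card hAI, hcard, hA.2]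

lemma wedge_gpow (m : ℕ) (φ : DForm n) (I J : Finset (Fin n)) :
    wedge (dpow (gMetric n) m) φ I J
      = (m.factorial : ℝ) * ∑ A ∈ (I ∩ J).powersetCard m,
          shuffleSign A (I \ A) * shuffleSign A (J \ A) * φ (I \ A) (J \ A) :=
  wedge_diag _ _ m _ (fun A B => gpow_eq m A B) I J

lemma citer_eq (θ : DForm n) : ∀ (i : ℕ) (I J : Finset (Fin n)),
    citer θ i I J = (i.factorial : ℝ) * ∑ S ∈ ((I ∪ J)ᶜ).powersetCard i,
      shuffleSign S I * shuffleSign S J * θ (S ∪ I) (S ∪ J)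
  | 0, I, J => by
    rw [citer]
    simp [Finset.powersetCard_zero, shuffleSign_empty_left]
  | k + 1, I, J => by
    rw [citer, contr]
    have step1 : ∀ j : Fin n,
        (if j ∈ I ∨ j ∈ J then 0
          else shuffleSign {j} I * shuffleSign {j} J *
            citer θ k (insert j I) (insert j J))
        = if j ∈ (I ∪ J)ᶜ then
            shuffleSign {j} I * shuffleSign {j} J *
              citer θ k (insert j I) (insert j J) else 0 := by
      intro j
      by_cases hj : j ∈ I ∨ j ∈ J
      · rw [if_pos hj, if_neg]
        simp only [Finset.mem_compl, Finset.mem_union]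
        exact fun hh => hh hj
      · rw [if_neg hj, if_pos]
        simp only [Finset.mem_compl, Finset.mem_union]
        exact hj
    rw [Finset.sum_congr rfl (fun j _ => step1 j), ← Finset.sum_filter,
      Finset.filter_mem_eq_inter, Finset.univ_inter]
    have step2 : ∀ j ∈ (I ∪ J)ᶜ,
        shuffleSign {j} I * shuffleSign {j} J * citer θ k (insert j I) (insert j J)
        = (k.factorial : ℝ) * ∑ S ∈ (((I ∪ J)ᶜ).erase j).powersetCard k,
            (shuffleSign (insert j S) I * shuffleSign (insert j S) J *
              θ (insert j S ∪ I) (insert j S ∪ J)) := by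
      intro j hj
      simp only [Finset.mem_compl, Finset.mem_union] at hj
      push_neg at hj
      have e1 : insert j I ∪ insert j J = insert j (I ∪ J) := by
        rw [Finset.insert_union, Finset.union_insert, Finset.insert_idem]
      have e2 : (insert j (I ∪ J))ᶜ = ((I ∪ J)ᶜ).erase j := Finset.compl_insert
      rw [citer_eq θ k, e1, e2, mul_left_comm, Finset.mul_sum]
      refine congrArg _ (Finset.sum_congr rfl fun S hS => ?_)
      rw [Finset.mem_powersetCard] at hS
      have hjS : j ∉ S := fun hh => (Finset.notMem_erase j _) (hS.1 hh)
      rw [shuffleSign_insert_right S hj.1, shuffleSign_insert_right S hj.2,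
        shuffleSign_insert_left hjS I, shuffleSign_insert_left hjS J,
        show S ∪ insert j I = insert j S ∪ I by rw [Finset.union_insert, Finset.insert_union],
        show S ∪ insert j J = insert j S ∪ J by rw [Finset.union_insert, Finset.insert_union]]
      linear_combination (shuffleSign {j} I * shuffleSign {j} J * shuffleSign S I *
        shuffleSign S J * θ (insert j S ∪ I) (insert j S ∪ J)) * shuffleSign_sq S {j}
    rw [Finset.sum_congr rfl step2, ← Finset.mul_sum]
    set X := (I ∪ J)ᶜ with hX
    have bij : ∑ x ∈ X.sigma (fun j => (X.erase j).powersetCard k),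
          (shuffleSign (insert x.1 x.2) I * shuffleSign (insert x.1 x.2) J *
            θ (insert x.1 x.2 ∪ I) (insert x.1 x.2 ∪ J))
        = ∑ x ∈ (X.powersetCard (k + 1)).sigma (fun T => T),
          (shuffleSign x.1 I * shuffleSign x.1 J * θ (x.1 ∪ I) (x.1 ∪ J)) := by
      refine Finset.sum_nbij' (fun x => ⟨insert x.1 x.2, x.1⟩)
        (fun y => ⟨y.2, y.1.erase y.2⟩) ?_ ?_ ?_ ?_ ?_
      · rintro ⟨j, S⟩ hx
        rw [Finset.mem_sigma] at hx
        obtain ⟨hj, hS⟩ := hx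
        rw [Finset.mem_powersetCard] at hS
        have hjS : j ∉ S := fun hh => Finset.notMem_erase j X (hS.1 hh)
        rw [Finset.mem_sigma, Finset.mem_powersetCard]
        exact ⟨⟨Finset.insert_subset hj (hS.1.trans (Finset.erase_subset _ _)),
          by rw [Finset.card_insert_of_notMem hjS, hS.2]⟩, Finset.mem_insert_self _ _⟩
      · rintro ⟨T, j⟩ hy
        rw [Finset.mem_sigma, Finset.mem_powersetCard] at hy
        rw [Finset.mem_sigma, Finset.mem_powersetCard]
        refine ⟨hy.1.1 hy.2, ⟨?_, ?_⟩⟩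
        · exact (Finset.erase_subset_erase j hy.1.1)
        · rw [Finset.card_erase_of_mem hy.2, hy.1.2]
          omega
      · rintro ⟨j, S⟩ hx
        rw [Finset.mem_sigma] at hx
        obtain ⟨hj, hS⟩ := hx
        rw [Finset.mem_powersetCard] at hS
        have hjS : j ∉ S := fun hh => Finset.notMem_erase j X (hS.1 hh)
        simp only [Finset.erase_insert hjS]
      · rintro ⟨T, j⟩ hy
        rw [Finset.mem_sigma] at hy
        simp only [Finset.insert_erase hy.2]
      · rintro ⟨j, S⟩ _
        rfl
    have chain : ∑ j ∈ X, ∑ S ∈ (X.erase j).powersetCard k,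
        (shuffleSign (insert j S) I * shuffleSign (insert j S) J *
          θ (insert j S ∪ I) (insert j S ∪ J))
        = ((k : ℝ) + 1) * ∑ T ∈ X.powersetCard (k + 1),
            (shuffleSign T I * shuffleSign T J * θ (T ∪ I) (T ∪ J)) := by
      rw [Finset.sum_sigma', bij, Finset.sum_sigma, Finset.mul_sum]
      refine Finset.sum_congr rfl fun T hT => ?_
      rw [Finset.mem_powersetCard] at hT
      dsimp only
      rw [Finset.sum_const, hT.2, nsmul_eq_mul]
      push_cast; ring
    rw [chain, Nat.factorial_succ, Nat.cast_mul]
    push_cast; ring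

end DForm
namespace DForm

variable {n : ℕ}

lemma term_toggle (θ : DForm n) (I J A S : Finset (Fin n)) (x : Fin n)
    (hxI : x ∈ I) (hxJ : x ∈ J) (hxA : x ∉ A) (hxS : x ∉ S) :
    shuffleSign (insert x A) (I \ insert x A) * shuffleSign (insert x A) (J \ insert x A) *
      (shuffleSign (insert x S) (I \ insert x A) * shuffleSign (insert x S) (J \ insert x A) *
        θ (insert x S ∪ (I \ insert x A)) (insert x S ∪ (J \ insert x A)))
    = shuffleSign A (I \ A) * shuffleSign A (J \ A) *
      (shuffleSign S (I \ A) * shuffleSign S (J \ A) * θ (S ∪ (I \ A)) (S ∪ (J \ A))) := by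
  have hxIA : x ∈ I \ A := Finset.mem_sdiff.2 ⟨hxI, hxA⟩
  have hxJA : x ∈ J \ A := Finset.mem_sdiff.2 ⟨hxJ, hxA⟩
  have eU : insert x S ∪ (I \ A).erase x = S ∪ (I \ A) := by
    rw [Finset.insert_union, ← Finset.union_insert, Finset.insert_erase hxIA]
  have eV : insert x S ∪ (J \ A).erase x = S ∪ (J \ A) := by
    rw [Finset.insert_union, ← Finset.union_insert, Finset.insert_erase hxJA]
  rw [Finset.sdiff_insert I A x, Finset.sdiff_insert J A x, eU, eV]
  set B := (I \ A).erase x with hB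
  set C := (J \ A).erase x with hC
  have hxB : x ∉ B := Finset.notMem_erase x _
  have hxC : x ∉ C := Finset.notMem_erase x _
  have rI : I \ A = insert x B := (Finset.insert_erase hxIA).symm
  have rJ : J \ A = insert x C := (Finset.insert_erase hxJA).symm
  rw [rI, rJ, shuffleSign_insert_left hxA B, shuffleSign_insert_left hxA C,
    shuffleSign_insert_left hxS B, shuffleSign_insert_left hxS C,
    shuffleSign_insert_right A hxB, shuffleSign_insert_right A hxC,
    shuffleSign_insert_right S hxB, shuffleSign_insert_right S hxC]
  linear_combination (shuffleSign A B * shuffleSign A C * shuffleSign S B * shuffleSign S C *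
      θ (S ∪ insert x B) (S ∪ insert x C) * (shuffleSign {x} C * shuffleSign {x} C)) *
        shuffleSign_sq {x} B
    + (shuffleSign A B * shuffleSign A C * shuffleSign S B * shuffleSign S C *
      θ (S ∪ insert x B) (S ∪ insert x C)) * shuffleSign_sq {x} C
    - (shuffleSign A B * shuffleSign A C * shuffleSign S B * shuffleSign S C *
      θ (S ∪ insert x B) (S ∪ insert x C) * (shuffleSign S {x} * shuffleSign S {x})) *
        shuffleSign_sq A {x}
    - (shuffleSign A B * shuffleSign A C * shuffleSign S B * shuffleSign S C *
      θ (S ∪ insert x B) (S ∪ insert x C)) * shuffleSign_sq S {x}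

lemma theta_zero_of_F_empty (θ : DForm n) (P r i : ℕ) (hθ : IsOfDeg θ P P)
    (hn : n < r + P) (I J A S : Finset (Fin n))
    (hAIJ : A ⊆ I ∩ J) (hcA : A.card = r + i - P) (hir : P ≤ r + i)
    (hS : S ⊆ ((I \ A) ∪ (J \ A))ᶜ) (hcS : S.card = i)
    (hF : ((I ∩ J) ∩ (S ∪ (I \ A))) ∩ (S ∪ (J \ A)) = ∅) :
    θ (S ∪ (I \ A)) (S ∪ (J \ A)) = 0 := by
  by_contra hne
  obtain ⟨hU, hV⟩ := hθ _ _ hne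
  have hAI : A ⊆ I := fun y hy => (Finset.mem_inter.1 (hAIJ hy)).1
  have hAJ : A ⊆ J := fun y hy => (Finset.mem_inter.1 (hAIJ hy)).2
  have hSd : ∀ y ∈ S, y ∉ I \ A ∧ y ∉ J \ A := by
    intro y hy
    have h2 := hS hy
    rw [Finset.mem_compl, Finset.mem_union] at h2
    exact ⟨fun h1 => h2 (Or.inl h1), fun h1 => h2 (Or.inr h1)⟩
  have hnotF : ∀ y : Fin n, y ∉ ((I ∩ J) ∩ (S ∪ (I \ A))) ∩ (S ∪ (J \ A)) := by
    intro y hy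
    rw [hF] at hy
    exact Finset.notMem_empty y hy
  have hIJsub : I ∩ J ⊆ A := by
    intro y hy
    by_contra hyA
    exact hnotF y (Finset.mem_inter.2 ⟨Finset.mem_inter.2 ⟨hy,
      Finset.mem_union.2 (Or.inr (Finset.mem_sdiff.2 ⟨(Finset.mem_inter.1 hy).1, hyA⟩))⟩,
      Finset.mem_union.2 (Or.inr (Finset.mem_sdiff.2 ⟨(Finset.mem_inter.1 hy).2, hyA⟩))⟩)
  have hSI : ∀ y ∈ S, y ∉ I := by
    intro y hy hyI
    have hyA : y ∈ A := by
      by_contra hyA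
      exact (hSd y hy).1 (Finset.mem_sdiff.2 ⟨hyI, hyA⟩)
    exact hnotF y (Finset.mem_inter.2 ⟨Finset.mem_inter.2 ⟨hAIJ hyA,
      Finset.mem_union.2 (Or.inl hy)⟩, Finset.mem_union.2 (Or.inl hy)⟩)
  have hSJ : ∀ y ∈ S, y ∉ J := by
    intro y hy hyJ
    have hyA : y ∈ A := by
      by_contra hyA
      exact (hSd y hy).2 (Finset.mem_sdiff.2 ⟨hyJ, hyA⟩)
    exact hnotF y (Finset.mem_inter.2 ⟨Finset.mem_inter.2 ⟨hAIJ hyA,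
      Finset.mem_union.2 (Or.inl hy)⟩, Finset.mem_union.2 (Or.inl hy)⟩)
  have hdSI : Disjoint S (I \ A) := Finset.disjoint_left.2 (fun {y} hy => (hSd y hy).1)
  have hdSJ : Disjoint S (J \ A) := Finset.disjoint_left.2 (fun {y} hy => (hSd y hy).2)
  have c1 : (S ∪ (I \ A)).card = S.card + (I \ A).card := Finset.card_union_of_disjoint hdSI
  have c2 : (S ∪ (J \ A)).card = S.card + (J \ A).card := Finset.card_union_of_disjoint hdSJ
  have c3 : (I \ A).card = I.card - A.card := Finset.card_sdiff_of_subset hAI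
  have c4 : (J \ A).card = J.card - A.card := Finset.card_sdiff_of_subset hAJ
  have c5 : A.card ≤ I.card := Finset.card_le_card hAI
  have c6 : A.card ≤ J.card := Finset.card_le_card hAJ
  have hdisj : Disjoint (I ∪ J) S := by
    rw [Finset.disjoint_right]
    intro y hy hy2
    rcases Finset.mem_union.1 hy2 with h1 | h1
    · exact hSI y hy h1
    · exact hSJ y hy h1
  have c7 : ((I ∪ J) ∪ S).card = (I ∪ J).card + S.card :=
    Finset.card_union_of_disjoint hdisj
  have c8 : (I ∪ J).card + (I ∩ J).card = I.card + J.card :=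
    Finset.card_union_add_card_inter I J
  have c9 : (I ∩ J).card = A.card := by
    rw [Finset.Subset.antisymm hAIJ hIJsub]
  have c10 : ((I ∪ J) ∪ S).card ≤ n := by
    have h2 := Finset.card_le_univ ((I ∪ J) ∪ S)
    simpa using h2
  omega

lemma theta_zero_of_blocked (θ : DForm n) (P : ℕ) (hθ : IsOfDeg θ P P)
    (I J A S : Finset (Fin n)) (a : Fin n) (haI : a ∈ I) (haA : a ∉ A)
    (hS : S ⊆ ((I \ A) ∪ (J \ A))ᶜ) (hcS : S.card = P) :
    θ (S ∪ (I \ A)) (S ∪ (J \ A)) = 0 := by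
  by_contra hne
  obtain ⟨hU, _⟩ := hθ _ _ hne
  have hdSI : Disjoint S (I \ A) := by
    rw [Finset.disjoint_left]
    intro y hy hy2
    have h2 := hS hy
    rw [Finset.mem_compl, Finset.mem_union] at h2
    exact h2 (Or.inl hy2)
  have c1 : (S ∪ (I \ A)).card = S.card + (I \ A).card := Finset.card_union_of_disjoint hdSI
  have c2 : 1 ≤ (I \ A).card := Finset.card_pos.2 ⟨a, Finset.mem_sdiff.2 ⟨haI, haA⟩⟩
  omega

/-- The toggling set. -/
def togF (I J : Finset (Fin n)) (x : Σ _ : ℕ, Σ _ : Finset (Fin n), Finset (Fin n)) :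
    Finset (Fin n) :=
  ((I ∩ J) ∩ (x.2.2 ∪ (I \ x.2.1))) ∩ (x.2.2 ∪ (J \ x.2.1))

/-- The toggling involution. -/
noncomputable def tog (P : ℕ) (I J : Finset (Fin n))
    (x : Σ _ : ℕ, Σ _ : Finset (Fin n), Finset (Fin n)) :
    Σ _ : ℕ, Σ _ : Finset (Fin n), Finset (Fin n) :=
  if h : (togF I J x).Nonempty then
    if (togF I J x).min' h ∈ x.2.1 then
      ⟨x.1 - 1, x.2.1.erase ((togF I J x).min' h), x.2.2.erase ((togF I J x).min' h)⟩
    else if x.1 < P then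
      ⟨x.1 + 1, insert ((togF I J x).min' h) x.2.1, insert ((togF I J x).min' h) x.2.2⟩
    else x
  else x

end DForm
namespace DForm

variable {n : ℕ}

lemma tog_down (P : ℕ) (I J : Finset (Fin n))
    (x : Σ _ : ℕ, Σ _ : Finset (Fin n), Finset (Fin n))
    (h : (togF I J x).Nonempty) (hA : (togF I J x).min' h ∈ x.2.1) :
    tog P I J x = ⟨x.1 - 1, x.2.1.erase ((togF I J x).min' h),
      x.2.2.erase ((togF I J x).min' h)⟩ := by
  unfold tog
  rw [dif_pos h, if_pos hA]

lemma tog_up (P : ℕ) (I J : Finset (Fin n))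
    (x : Σ _ : ℕ, Σ _ : Finset (Fin n), Finset (Fin n))
    (h : (togF I J x).Nonempty) (hA : (togF I J x).min' h ∉ x.2.1) (hP : x.1 < P) :
    tog P I J x = ⟨x.1 + 1, insert ((togF I J x).min' h) x.2.1,
      insert ((togF I J x).min' h) x.2.2⟩ := by
  unfold tog
  rw [dif_pos h, if_neg hA, if_pos hP]

lemma tog_stay_blocked (P : ℕ) (I J : Finset (Fin n))
    (x : Σ _ : ℕ, Σ _ : Finset (Fin n), Finset (Fin n))
    (h : (togF I J x).Nonempty) (hA : (togF I J x).min' h ∉ x.2.1) (hP : ¬x.1 < P) :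
    tog P I J x = x := by
  unfold tog
  rw [dif_pos h, if_neg hA, if_neg hP]

lemma tog_stay_empty (P : ℕ) (I J : Finset (Fin n))
    (x : Σ _ : ℕ, Σ _ : Finset (Fin n), Finset (Fin n))
    (h : ¬(togF I J x).Nonempty) : tog P I J x = x := by
  unfold tog
  rw [dif_neg h]

lemma core (θ : DForm n) (P r : ℕ) (hθ : IsOfDeg θ P P) (hn : n < r + P)
    (I J : Finset (Fin n)) :
    ∑ x ∈ (Finset.Icc (P - r) P).sigma (fun i =>
        ((I ∩ J).powersetCard (r + i - P)).sigma (fun A =>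
          (((I \ A) ∪ (J \ A))ᶜ).powersetCard i)),
      ((-1 : ℝ) ^ (x.1 + P) *
        (shuffleSign x.2.1 (I \ x.2.1) * shuffleSign x.2.1 (J \ x.2.1) *
          (shuffleSign x.2.2 (I \ x.2.1) * shuffleSign x.2.2 (J \ x.2.1) *
            θ (x.2.2 ∪ (I \ x.2.1)) (x.2.2 ∪ (J \ x.2.1))))) = 0 := by
  classical
  have unpackF : ∀ (i : ℕ) (A S : Finset (Fin n)) (a : Fin n),
      a ∈ togF I J (⟨i, A, S⟩ : Σ _ : ℕ, Σ _ : Finset (Fin n), Finset (Fin n)) →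
      (a ∈ I ∧ a ∈ J) ∧ a ∈ S ∪ (I \ A) ∧ a ∈ S ∪ (J \ A) := by
    intro i A S a h
    unfold togF at h
    dsimp only at h
    rw [Finset.mem_inter, Finset.mem_inter] at h
    exact ⟨Finset.mem_inter.1 h.1.1, h.1.2, h.2⟩
  refine Finset.sum_involution (fun x _ => tog P I J x) ?_ ?_ ?_ ?_
  -- h₁ : f x + f (tog x) = 0
  · rintro ⟨i, A, S⟩ hx
    simp only [Finset.mem_sigma, Finset.mem_Icc, Finset.mem_powersetCard] at hx
    obtain ⟨⟨hi1, hi2⟩, ⟨hAIJ, hcA⟩, hSc, hcS⟩ := hx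
    dsimp only
    by_cases hne : (togF I J (⟨i, A, S⟩ :
        Σ _ : ℕ, Σ _ : Finset (Fin n), Finset (Fin n))).Nonempty
    · obtain ⟨⟨haI, haJ⟩, haU, haV⟩ := unpackF i A S _ (Finset.min'_mem _ hne)
      by_cases hA : (togF I J (⟨i, A, S⟩ :
          Σ _ : ℕ, Σ _ : Finset (Fin n), Finset (Fin n))).min' hne ∈ A
      · -- down
        set a := (togF I J (⟨i, A, S⟩ :
          Σ _ : ℕ, Σ _ : Finset (Fin n), Finset (Fin n))).min' hne with ha_def
        have haS : a ∈ S := by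
          rcases Finset.mem_union.1 haU with h | h
          · exact h
          · exact absurd hA (Finset.mem_sdiff.1 h).2
        have hi0 : 1 ≤ i := by
          have := Finset.card_pos.2 ⟨a, haS⟩
          omega
        rw [tog_down P I J _ hne hA]
        dsimp only
        have tt := term_toggle θ I J (A.erase a) (S.erase a) a haI haJ
          (Finset.notMem_erase a A) (Finset.notMem_erase a S)
        rw [Finset.insert_erase hA, Finset.insert_erase haS] at tt
        rw [← tt, show i + P = (i - 1 + P) + 1 from by omega, pow_succ]
        ring
      · -- up or blocked
        set a := (togF I J (⟨i, A, S⟩ :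
          Σ _ : ℕ, Σ _ : Finset (Fin n), Finset (Fin n))).min' hne with ha_def
        have haS : a ∉ S := by
          intro h
          have h2 := hSc h
          rw [Finset.mem_compl, Finset.mem_union] at h2
          exact h2 (Or.inl (Finset.mem_sdiff.2 ⟨haI, hA⟩))
        by_cases hiP : i < P
        · rw [tog_up P I J _ hne hA (by dsimp only; omega)]
          dsimp only
          have tt := term_toggle θ I J A S a haI haJ hA haS
          rw [tt, show i + 1 + P = (i + P) + 1 from by omega, pow_succ]
          ring
        · rw [tog_stay_blocked P I J _ hne hA (by dsimp only; omega)]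
          dsimp only
          have hz := theta_zero_of_blocked θ P hθ I J A S a haI hA hSc (by omega)
          rw [hz]
          ring
    · rw [tog_stay_empty P I J _ hne]
      dsimp only
      have hF : ((I ∩ J) ∩ (S ∪ (I \ A))) ∩ (S ∪ (J \ A)) = ∅ := by
        have h2 := Finset.not_nonempty_iff_eq_empty.1 hne
        unfold togF at h2
        dsimp only at h2
        exact h2
      have hz := theta_zero_of_F_empty θ P r i hθ hn I J A S hAIJ hcA (by omega) hSc hcS hF
      rw [hz]
      ring
  -- g_ne : f x ≠ 0 → tog x ≠ x
  · rintro ⟨i, A, S⟩ hx hfne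
    simp only [Finset.mem_sigma, Finset.mem_Icc, Finset.mem_powersetCard] at hx
    obtain ⟨⟨hi1, hi2⟩, ⟨hAIJ, hcA⟩, hSc, hcS⟩ := hx
    dsimp only at hfne ⊢
    by_cases hne : (togF I J (⟨i, A, S⟩ :
        Σ _ : ℕ, Σ _ : Finset (Fin n), Finset (Fin n))).Nonempty
    · obtain ⟨⟨haI, haJ⟩, haU, haV⟩ := unpackF i A S _ (Finset.min'_mem _ hne)
      by_cases hA : (togF I J (⟨i, A, S⟩ :
          Σ _ : ℕ, Σ _ : Finset (Fin n), Finset (Fin n))).min' hne ∈ A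
      · set a := (togF I J (⟨i, A, S⟩ :
          Σ _ : ℕ, Σ _ : Finset (Fin n), Finset (Fin n))).min' hne with ha_def
        have haS : a ∈ S := by
          rcases Finset.mem_union.1 haU with h | h
          · exact h
          · exact absurd hA (Finset.mem_sdiff.1 h).2
        have hi0 : 1 ≤ i := by
          have := Finset.card_pos.2 ⟨a, haS⟩
          omega
        rw [tog_down P I J _ hne hA]
        intro hEq
        have h1 := congrArg Sigma.fst hEq
        dsimp only at h1
        omega
      · set a := (togF I J (⟨i, A, S⟩ :
          Σ _ : ℕ, Σ _ : Finset (Fin n), Finset (Fin n))).min' hne with ha_def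
        have haS : a ∉ S := by
          intro h
          have h2 := hSc h
          rw [Finset.mem_compl, Finset.mem_union] at h2
          exact h2 (Or.inl (Finset.mem_sdiff.2 ⟨haI, hA⟩))
        by_cases hiP : i < P
        · rw [tog_up P I J _ hne hA (by dsimp only; omega)]
          intro hEq
          have h1 := congrArg Sigma.fst hEq
          dsimp only at h1
          omega
        · exfalso
          apply hfne
          have hz := theta_zero_of_blocked θ P hθ I J A S a haI hA hSc (by omega)
          rw [hz]
          ring
    · exfalso
      apply hfne
      have hF : ((I ∩ J) ∩ (S ∪ (I \ A))) ∩ (S ∪ (J \ A)) = ∅ := by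
        have h2 := Finset.not_nonempty_iff_eq_empty.1 hne
        unfold togF at h2
        dsimp only at h2
        exact h2
      have hz := theta_zero_of_F_empty θ P r i hθ hn I J A S hAIJ hcA (by omega) hSc hcS hF
      rw [hz]
      ring
  -- g_mem
  · rintro ⟨i, A, S⟩ hx
    simp only [Finset.mem_sigma, Finset.mem_Icc, Finset.mem_powersetCard] at hx
    obtain ⟨⟨hi1, hi2⟩, ⟨hAIJ, hcA⟩, hSc, hcS⟩ := hx
    by_cases hne : (togF I J (⟨i, A, S⟩ :
        Σ _ : ℕ, Σ _ : Finset (Fin n), Finset (Fin n))).Nonempty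
    · obtain ⟨⟨haI, haJ⟩, haU, haV⟩ := unpackF i A S _ (Finset.min'_mem _ hne)
      by_cases hA : (togF I J (⟨i, A, S⟩ :
          Σ _ : ℕ, Σ _ : Finset (Fin n), Finset (Fin n))).min' hne ∈ A
      · set a := (togF I J (⟨i, A, S⟩ :
          Σ _ : ℕ, Σ _ : Finset (Fin n), Finset (Fin n))).min' hne with ha_def
        have haS : a ∈ S := by
          rcases Finset.mem_union.1 haU with h | h
          · exact h
          · exact absurd hA (Finset.mem_sdiff.1 h).2
        have hi0 : 1 ≤ i := by
          have := Finset.card_pos.2 ⟨a, haS⟩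
          omega
        have hA1 : 1 ≤ A.card := Finset.card_pos.2 ⟨a, hA⟩
        rw [tog_down P I J _ hne hA]
        simp only [Finset.mem_sigma, Finset.mem_Icc, Finset.mem_powersetCard]
        have eIA : I \ A.erase a = insert a (I \ A) := Finset.sdiff_erase haI
        have eJA : J \ A.erase a = insert a (J \ A) := Finset.sdiff_erase haJ
        refine ⟨⟨by omega, by omega⟩, ⟨(Finset.erase_subset a A).trans hAIJ,
          by rw [Finset.card_erase_of_mem hA]; omega⟩, ?_,
          by rw [Finset.card_erase_of_mem haS]; omega⟩
        intro y hy
        obtain ⟨hya, hyS⟩ := Finset.mem_erase.1 hy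
        rw [Finset.mem_compl, Finset.mem_union, eIA, eJA]
        have h2 := hSc hyS
        rw [Finset.mem_compl, Finset.mem_union] at h2
        rintro (h | h)
        · rcases Finset.mem_insert.1 h with rfl | h3
          · exact hya rfl
          · exact h2 (Or.inl h3)
        · rcases Finset.mem_insert.1 h with rfl | h3
          · exact hya rfl
          · exact h2 (Or.inr h3)
      · set a := (togF I J (⟨i, A, S⟩ :
          Σ _ : ℕ, Σ _ : Finset (Fin n), Finset (Fin n))).min' hne with ha_def
        have haS : a ∉ S := by
          intro h
          have h2 := hSc h
          rw [Finset.mem_compl, Finset.mem_union] at h2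
          exact h2 (Or.inl (Finset.mem_sdiff.2 ⟨haI, hA⟩))
        by_cases hiP : i < P
        · rw [tog_up P I J _ hne hA (by dsimp only; omega)]
          simp only [Finset.mem_sigma, Finset.mem_Icc, Finset.mem_powersetCard]
          have eIA : I \ insert a A = (I \ A).erase a := Finset.sdiff_insert I A a
          have eJA : J \ insert a A = (J \ A).erase a := Finset.sdiff_insert J A a
          refine ⟨⟨by omega, by omega⟩,
            ⟨Finset.insert_subset (Finset.mem_inter.2 ⟨haI, haJ⟩) hAIJ,
              by rw [Finset.card_insert_of_notMem hA]; omega⟩, ?_,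
            by rw [Finset.card_insert_of_notMem haS, hcS]⟩
          intro y hy
          rw [Finset.mem_compl, Finset.mem_union, eIA, eJA]
          rcases Finset.mem_insert.1 hy with rfl | hyS
          · rintro (h | h) <;> exact Finset.notMem_erase _ _ h
          · have h2 := hSc hyS
            rw [Finset.mem_compl, Finset.mem_union] at h2
            rintro (h | h)
            · exact h2 (Or.inl (Finset.erase_subset a _ h))
            · exact h2 (Or.inr (Finset.erase_subset a _ h))
        · rw [tog_stay_blocked P I J _ hne hA (by dsimp only; omega)]
          simp only [Finset.mem_sigma, Finset.mem_Icc, Finset.mem_powersetCard]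
          exact ⟨⟨hi1, hi2⟩, ⟨hAIJ, hcA⟩, hSc, hcS⟩
    · rw [tog_stay_empty P I J _ hne]
      simp only [Finset.mem_sigma, Finset.mem_Icc, Finset.mem_powersetCard]
      exact ⟨⟨hi1, hi2⟩, ⟨hAIJ, hcA⟩, hSc, hcS⟩
  -- g_inv : tog (tog x) = x
  · rintro ⟨i, A, S⟩ hx
    simp only [Finset.mem_sigma, Finset.mem_Icc, Finset.mem_powersetCard] at hx
    obtain ⟨⟨hi1, hi2⟩, ⟨hAIJ, hcA⟩, hSc, hcS⟩ := hx
    by_cases hne : (togF I J (⟨i, A, S⟩ :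
        Σ _ : ℕ, Σ _ : Finset (Fin n), Finset (Fin n))).Nonempty
    · obtain ⟨⟨haI, haJ⟩, haU, haV⟩ := unpackF i A S _ (Finset.min'_mem _ hne)
      by_cases hA : (togF I J (⟨i, A, S⟩ :
          Σ _ : ℕ, Σ _ : Finset (Fin n), Finset (Fin n))).min' hne ∈ A
      · -- down, then up
        set a := (togF I J (⟨i, A, S⟩ :
          Σ _ : ℕ, Σ _ : Finset (Fin n), Finset (Fin n))).min' hne with ha_def
        have haS : a ∈ S := by
          rcases Finset.mem_union.1 haU with h | h
          · exact h
          · exact absurd hA (Finset.mem_sdiff.1 h).2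
        have hi0 : 1 ≤ i := by
          have := Finset.card_pos.2 ⟨a, haS⟩
          omega
        rw [tog_down P I J _ hne hA]
        have eIA : I \ A.erase a = insert a (I \ A) := Finset.sdiff_erase haI
        have eJA : J \ A.erase a = insert a (J \ A) := Finset.sdiff_erase haJ
        have eU : S.erase a ∪ (I \ A.erase a) = S ∪ (I \ A) := by
          rw [eIA, Finset.union_insert, ← Finset.insert_union, Finset.insert_erase haS]
        have eV : S.erase a ∪ (J \ A.erase a) = S ∪ (J \ A) := by
          rw [eJA, Finset.union_insert, ← Finset.insert_union, Finset.insert_erase haS]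
        have hFF : togF I J (⟨i - 1, A.erase a, S.erase a⟩ :
            Σ _ : ℕ, Σ _ : Finset (Fin n), Finset (Fin n))
            = togF I J (⟨i, A, S⟩ : Σ _ : ℕ, Σ _ : Finset (Fin n), Finset (Fin n)) := by
          unfold togF
          dsimp only
          rw [eU, eV]
        have h' : (togF I J (⟨i - 1, A.erase a, S.erase a⟩ :
            Σ _ : ℕ, Σ _ : Finset (Fin n), Finset (Fin n))).Nonempty := by
          rw [hFF]; exact hne
        have hmin : (togF I J (⟨i - 1, A.erase a, S.erase a⟩ :
            Σ _ : ℕ, Σ _ : Finset (Fin n), Finset (Fin n))).min' h' = a := by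
          simp only [hFF]
          rfl
        rw [tog_up P I J _ h' (by rw [hmin]; exact Finset.notMem_erase a A)
          (by dsimp only; omega)]
        simp only [hmin, Finset.insert_erase hA, Finset.insert_erase haS]
        have : i - 1 + 1 = i := by omega
        rw [this]
      · set a := (togF I J (⟨i, A, S⟩ :
          Σ _ : ℕ, Σ _ : Finset (Fin n), Finset (Fin n))).min' hne with ha_def
        have haS : a ∉ S := by
          intro h
          have h2 := hSc h
          rw [Finset.mem_compl, Finset.mem_union] at h2
          exact h2 (Or.inl (Finset.mem_sdiff.2 ⟨haI, hA⟩))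
        have haIA : a ∈ I \ A := Finset.mem_sdiff.2 ⟨haI, hA⟩
        have haJA : a ∈ J \ A := Finset.mem_sdiff.2 ⟨haJ, hA⟩
        by_cases hiP : i < P
        · -- up, then down
          rw [tog_up P I J _ hne hA (by dsimp only; omega)]
          have eIA : I \ insert a A = (I \ A).erase a := Finset.sdiff_insert I A a
          have eJA : J \ insert a A = (J \ A).erase a := Finset.sdiff_insert J A a
          have eU : insert a S ∪ (I \ insert a A) = S ∪ (I \ A) := by
            rw [eIA, Finset.insert_union, ← Finset.union_insert, Finset.insert_erase haIA]
          have eV : insert a S ∪ (J \ insert a A) = S ∪ (J \ A) := by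
            rw [eJA, Finset.insert_union, ← Finset.union_insert, Finset.insert_erase haJA]
          have hFF : togF I J (⟨i + 1, insert a A, insert a S⟩ :
              Σ _ : ℕ, Σ _ : Finset (Fin n), Finset (Fin n))
              = togF I J (⟨i, A, S⟩ : Σ _ : ℕ, Σ _ : Finset (Fin n), Finset (Fin n)) := by
            unfold togF
            dsimp only
            rw [eU, eV]
          have h' : (togF I J (⟨i + 1, insert a A, insert a S⟩ :
              Σ _ : ℕ, Σ _ : Finset (Fin n), Finset (Fin n))).Nonempty := by
            rw [hFF]; exact hne
          have hmin : (togF I J (⟨i + 1, insert a A, insert a S⟩ :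
              Σ _ : ℕ, Σ _ : Finset (Fin n), Finset (Fin n))).min' h' = a := by
            simp only [hFF]
            rfl
          rw [tog_down P I J _ h' (by rw [hmin]; exact Finset.mem_insert_self a A)]
          simp only [hmin, Finset.erase_insert hA, Finset.erase_insert haS,
            Nat.add_sub_cancel]
        · rw [tog_stay_blocked P I J _ hne hA (by dsimp only; omega),
            tog_stay_blocked P I J _ hne hA (by dsimp only; omega)]
    · rw [tog_stay_empty P I J _ hne, tog_stay_empty P I J _ hne]

end DForm
namespace DForm

variable {n : ℕ}

lemma hCof_eq_zero {ω : DForm n} {p q r : ℕ} (hω : IsOfDeg ω p p)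
    (hn : n < r + p * q) : hCof ω p q r = 0 := by
  have hθ : IsOfDeg (dpow ω q) (p * q) (p * q) := isOfDeg_dpow hω q
  funext I J
  simp only [hCof, Finset.sum_apply, Pi.smul_apply, smul_eq_mul, Pi.zero_apply]
  have per : ∀ i ∈ Finset.Icc (p * q - r) (p * q),
      ((-1 : ℝ) ^ (i + p * q) /
          ((i.factorial : ℝ) * ((r + i - p * q).factorial : ℝ))) *
        wedge (dpow (gMetric n) (r + i - p * q)) (citer (dpow ω q) i) I J
      = ∑ A ∈ (I ∩ J).powersetCard (r + i - p * q),
          ∑ S ∈ (((I \ A) ∪ (J \ A))ᶜ).powersetCard i,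
            ((-1 : ℝ) ^ (i + p * q) *
              (shuffleSign A (I \ A) * shuffleSign A (J \ A) *
                (shuffleSign S (I \ A) * shuffleSign S (J \ A) *
                  dpow ω q (S ∪ (I \ A)) (S ∪ (J \ A))))) := by
    intro i _
    rw [wedge_gpow, Finset.sum_congr rfl
      (fun A _ => by rw [citer_eq (dpow ω q) i (I \ A) (J \ A)])]
    simp only [Finset.mul_sum]
    refine Finset.sum_congr rfl fun A _ => Finset.sum_congr rfl fun S _ => ?_
    have hi : (i.factorial : ℝ) ≠ 0 := Nat.cast_ne_zero.2 (Nat.factorial_ne_zero i)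
    have hm : (((r + i - p * q).factorial : ℝ)) ≠ 0 :=
      Nat.cast_ne_zero.2 (Nat.factorial_ne_zero _)
    field_simp
  rw [Finset.sum_congr rfl per]
  rw [Finset.sum_congr rfl (fun i _ => Finset.sum_sigma'
    ((I ∩ J).powersetCard (r + i - p * q))
    (fun A => (((I \ A) ∪ (J \ A))ᶜ).powersetCard i)
    (fun A S => ((-1 : ℝ) ^ (i + p * q) *
      (shuffleSign A (I \ A) * shuffleSign A (J \ A) *
        (shuffleSign S (I \ A) * shuffleSign S (J \ A) *
          dpow ω q (S ∪ (I \ A)) (S ∪ (J \ A)))))))]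
  rw [Finset.sum_sigma' (Finset.Icc (p * q - r) (p * q))
    (fun i => ((I ∩ J).powersetCard (r + i - p * q)).sigma
      (fun A => (((I \ A) ∪ (J \ A))ᶜ).powersetCard i))
    (fun i y => ((-1 : ℝ) ^ (i + p * q) *
      (shuffleSign y.1 (I \ y.1) * shuffleSign y.1 (J \ y.1) *
        (shuffleSign y.2 (I \ y.1) * shuffleSign y.2 (J \ y.1) *
          dpow ω q (y.2 ∪ (I \ y.1)) (y.2 ∪ (J \ y.1))))))]
  exact core (dpow ω q) (p * q) r hθ hn I J

end DForm
open DForm in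
/-- Higher algebraic identities: for `k > i ≥ 0` and `n-pk+pi+1 ≤ r ≤ pk-pi`,
`h_{(r,p(k-i))}(ω) = 0`; in particular for `n = pk` one has `h_{(r,n-pi)}(ω) = 0` for
`pi+1 ≤ r ≤ n-pi`, and for `n = pk+1` one has `h_{(r,n-pi-1)}(ω) = 0` for
`pi+2 ≤ r ≤ n-pi-1`. -/
theorem statement19 (n p : ℕ) (hp : 1 ≤ p) (ω : DForm n) (hsym : IsSym ω)
    (hb : FirstBianchi ω p) (hgr : IsOfDeg ω p p) :
    (∀ k i r : ℕ, i < k → n + p * i + 1 ≤ r + p * k → r + p * i ≤ p * k →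
      hCof ω p (k - i) r = 0) ∧
    (∀ k i r : ℕ, i < k → n = p * k → p * i + 1 ≤ r → r + p * i ≤ n →
      hCof ω p (k - i) r = 0) ∧
    (∀ k i r : ℕ, i < k → n = p * k + 1 → p * i + 2 ≤ r → r + p * i + 1 ≤ n →
      hCof ω p (k - i) r = 0) := by
  have key : ∀ k i r : ℕ, i < k → n < r + p * (k - i) → hCof ω p (k - i) r = 0 :=
    fun k i r _ hn => hCof_eq_zero hgr hn
  have harith : ∀ k i : ℕ, i < k → p * (k - i) + p * i = p * k := by
    intro k i hik
    rw [← Nat.left_distrib, Nat.sub_add_cancel hik.le]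
  refine ⟨?_, ?_, ?_⟩
  · intro k i r hik h1 h2
    have hm := harith k i hik
    exact key k i r hik (by omega)
  · intro k i r hik h1 h2 h3
    have hm := harith k i hik
    exact key k i r hik (by omega)
  · intro k i r hik h1 h2 h3
    have hm := harith k i hik
    exact key k i r hik (by omega)
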